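/- Let (A, ⋆) be a finite-dimensional algebra with F-linear involution over an algebraically closed field F with char F ≠ 2. Every element x ∈ U(A) that is conjugate to x⁻¹ in A splits as a product x = y z with y, z ∈ U(A) satisfying y⁴ = z⁴ = 1. -/

import Mathlib

open Module

section Nil
variable {R : Type*} [CommRing R]

lemma nil_sqrt_exists (h2 : IsUnit (2:R)) {n : R} (hn : IsNilpotent n) :
    ∃ m : R, IsNilpotent m ∧ (1+m)*(1+m) = 1+n := by
  obtain ⟨k, hk⟩ := hn
  obtain ⟨half, hhalf⟩ := h2.exists_right_inv
  set I : Ideal R := Ideal.span {n} with hI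
  let a : ℕ → R := fun j => Nat.rec 0 (fun _ aj => half * (n - aj^2)) j
  have ha0 : a 0 = 0 := rfl
  have haS : ∀ j, a (j+1) = half * (n - (a j)^2) := fun j => rfl
  have hnI : n ∈ I := Ideal.subset_span (Set.mem_singleton n)
  have hmem : ∀ j, a j ∈ I := by
    intro j
    induction j with
    | zero => simp [ha0]
    | succ j ih =>
      rw [haS]
      exact Ideal.mul_mem_left _ _ (I.sub_mem hnI
        (by simpa [pow_two] using I.mul_mem_left (a j) ih))
  have hdiff : ∀ j, a (j+1) - a j ∈ I^(j+1) := by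
    intro j
    induction j with
    | zero =>
      simp only [ha0, haS, sub_zero, pow_one]
      exact Ideal.mul_mem_left _ _ (by simpa using hnI)
    | succ j ih =>
      have heq : a (j+2) - a (j+1) = -half * ((a (j+1) - a j) * (a (j+1) + a j)) := by
        rw [haS (j+1), haS j]; ring
      rw [heq, pow_succ]
      exact Ideal.mul_mem_left _ _ (Ideal.mul_mem_mul ih (I.add_mem (hmem (j+1)) (hmem j)))
  have hIk : I^(k+1) = ⊥ := by
    rw [hI, Ideal.span_singleton_pow, pow_succ, hk, zero_mul, Ideal.span_singleton_eq_bot]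
  have hfix : a (k+1) = a k := by
    have h3 := hdiff k
    rw [hIk] at h3
    exact sub_eq_zero.mp ((Submodule.mem_bot R).mp h3)
  refine ⟨a k, ?_, ?_⟩
  · obtain ⟨c, hc⟩ := Ideal.mem_span_singleton'.mp (hmem k)
    exact ⟨k, by rw [← hc, mul_pow, hk, mul_zero]⟩
  · have h1 : a k = half * (n - (a k)^2) := by rw [← haS, hfix]
    have h2' : 2 * a k = 2 * half * (n - (a k)^2) := by rw [mul_assoc, ← h1]
    rw [hhalf, one_mul] at h2'
    linear_combination h2'

lemma nil_sqrt_unique (h2 : IsUnit (2:R)) {a b : R} (ha : IsNilpotent a) (hb : IsNilpotent b)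
    (h : (1+a)*(1+a) = (1+b)*(1+b)) : a = b := by
  have h1 : (a - b) * (2 + a + b) = 0 := by linear_combination h
  have hu : IsUnit (2 + a + b) := by
    have hab : IsNilpotent (a + b) := (Commute.all a b).isNilpotent_add ha hb
    have := hab.isUnit_add_right_of_commute h2 (Commute.all _ _)
    exact (by ring_nf : a + b + 2 = 2 + a + b) ▸ this
  obtain ⟨v, hv⟩ := hu.exists_right_inv
  have : (a - b) * ((2 + a + b) * v) = 0 := by rw [← mul_assoc, h1, zero_mul]
  rw [hv, mul_one] at this
  exact sub_eq_zero.mp this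

end Nil

section Local

lemma nilpotent_of_not_isUnit (F : Type*) {R : Type*} [Field F] [CommRing R] [Algebra F R]
    [FiniteDimensional F R] (hid : ∀ p : R, p*p = p → p = 0 ∨ p = 1)
    {b : R} (hb : ¬IsUnit b) : IsNilpotent b := by
  classical
  set f : ℕ → ℕ := fun k => finrank F ((Ideal.span {b^k}).restrictScalars F) with hf
  obtain ⟨k, hk⟩ : ∃ k, f k = sInf (Set.range f) := Nat.sInf_mem (Set.range_nonempty f)
  have hle : (Ideal.span {b^(k+1)} : Ideal R) ≤ Ideal.span {b^k} :=
    Ideal.span_singleton_le_span_singleton.mpr (pow_dvd_pow b (Nat.le_succ k))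
  have heq : ((Ideal.span {b^(k+1)} : Ideal R).restrictScalars F) =
      ((Ideal.span {b^k} : Ideal R).restrictScalars F) := by
    apply Submodule.eq_of_le_of_finrank_le (fun x hx => hle hx)
    rw [show finrank F ((Ideal.span {b^k} : Ideal R).restrictScalars F) = f k from rfl, hk]
    exact Nat.sInf_le ⟨k+1, rfl⟩
  have hmem : b^k ∈ (Ideal.span {b^(k+1)} : Ideal R) := by
    have : b^k ∈ ((Ideal.span {b^k} : Ideal R).restrictScalars F) :=
      (Submodule.restrictScalars_mem _ _ _).mpr (Ideal.mem_span_singleton_self _)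
    rw [← heq] at this
    exact (Submodule.restrictScalars_mem _ _ _).mp this
  obtain ⟨c, hc⟩ := Ideal.mem_span_singleton'.mp hmem
  rcases Nat.eq_zero_or_pos k with rfl | hkpos
  · exact absurd (IsUnit.of_mul_eq_one (a := b) c (by rw [mul_comm]; simpa using hc)) hb
  have claim : ∀ m, c^m * b^(k+m) = b^k := by
    intro m
    induction m with
    | zero => simp
    | succ m ih =>
      have : c^(m+1) * b^(k+(m+1)) = c^m * (c * b^(k+1)) * b^m := by ring
      rw [this, hc]
      calc c^m * b^k * b^m = c^m * b^(k+m) := by ring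
        _ = b^k := ih
  have hp : (c^k * b^k) * (c^k * b^k) = c^k * b^k := by
    calc (c^k * b^k) * (c^k * b^k) = (c^k * b^(k+k)) * c^k := by ring
      _ = b^k * c^k := by rw [claim]
      _ = c^k * b^k := by ring
  rcases hid _ hp with h0 | h1
  · refine ⟨k, ?_⟩
    calc b^k = c^k * b^(k+k) := (claim k).symm
      _ = (c^k * b^k) * b^k := by ring
      _ = 0 := by rw [h0, zero_mul]
  · exfalso
    apply hb
    refine IsUnit.of_mul_eq_one (a := b) (c^k * b^(k-1)) ?_
    have : b * (c^k * b^(k-1)) = c^k * b^k := by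
      rw [show b * (c^k * b^(k-1)) = c^k * (b^(k-1) * b) from by ring, ← pow_succ,
        Nat.sub_add_cancel hkpos]
    rw [this, h1]

lemma exists_scalar_nilpotent {F R : Type*} [Field F] [CommRing R] [Algebra F R]
    [FiniteDimensional F R] [Nontrivial R] [IsAlgClosed F]
    (hid : ∀ p : R, p*p = p → p = 0 ∨ p = 1) (a : R) :
    ∃ μ : F, IsNilpotent (a - algebraMap F R μ) := by
  obtain ⟨μ, hμ⟩ := spectrum.nonempty_of_isAlgClosed_of_finiteDimensional F a
  rw [spectrum.mem_iff] at hμ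
  refine ⟨μ, ?_⟩
  have := nilpotent_of_not_isUnit F hid hμ
  simpa using this.neg

end Local

section Split
variable {R : Type*} [CommRing R]

lemma quot_pair_lift {p : R} (y₁ : R ⧸ Ideal.span {p}) (y₂ : R ⧸ Ideal.span {1-p}) :
    ∃ y : R, Ideal.Quotient.mk (Ideal.span {p}) y = y₁ ∧
      Ideal.Quotient.mk (Ideal.span {1-p}) y = y₂ := by
  obtain ⟨r₁, rfl⟩ := Ideal.Quotient.mk_surjective y₁
  obtain ⟨r₂, rfl⟩ := Ideal.Quotient.mk_surjective y₂
  refine ⟨r₂ * p + r₁ * (1-p), ?_, ?_⟩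
  · rw [Ideal.Quotient.eq]
    exact Ideal.mem_span_singleton'.mpr ⟨r₂ - r₁, by ring⟩
  · rw [Ideal.Quotient.eq]
    exact Ideal.mem_span_singleton'.mpr ⟨r₁ - r₂, by ring⟩

lemma quot_pair_inj {p : R} (hp : p * p = p) {y : R}
    (h1 : Ideal.Quotient.mk (Ideal.span {p}) y = 0)
    (h2 : Ideal.Quotient.mk (Ideal.span {1-p}) y = 0) : y = 0 := by
  rw [Ideal.Quotient.eq_zero_iff_mem] at h1 h2
  obtain ⟨c, hc⟩ := Ideal.mem_span_singleton'.mp h1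
  obtain ⟨d, hd⟩ := Ideal.mem_span_singleton'.mp h2
  have hyp : y * p = 0 := by
    linear_combination (-p) * hd - d * hp
  have hyq : y * (1 - p) = 0 := by
    rw [← hc]; linear_combination (-c) * hp
  linear_combination hyp + hyq

lemma quot_findim (F : Type*) [Field F] [Algebra F R] [FiniteDimensional F R] (I : Ideal R) :
    FiniteDimensional F (R ⧸ I) :=
  Module.Finite.of_surjective (Ideal.Quotient.mkₐ F I).toLinearMap
    (Ideal.Quotient.mkₐ_surjective F I)

lemma quot_rank_lt (F : Type*) [Field F] [Algebra F R] [FiniteDimensional F R]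
    {q : R} (hq : q ≠ 0) :
    finrank F (R ⧸ Ideal.span {q}) < finrank F R := by
  set I : Ideal R := Ideal.span {q}
  have e1 : finrank F (R ⧸ I.restrictScalars F) = finrank F (R ⧸ I) :=
    (Submodule.Quotient.restrictScalarsEquiv F I).finrank_eq
  have e2 := Submodule.finrank_quotient_add_finrank (I.restrictScalars F)
  have hpos : 0 < finrank F (I.restrictScalars F) := by
    rw [Module.finrank_pos_iff]
    exact nontrivial_of_ne ⟨q, Ideal.mem_span_singleton_self q⟩ 0
      (by simp [Subtype.ext_iff, hq])
  omega

end Split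

universe u v

lemma sqrt_exists {F : Type u} [Field F] [IsAlgClosed F] (h2 : (2:F) ≠ 0) :
    ∀ (n : ℕ) (R : Type v) [CommRing R] [Algebra F R] [FiniteDimensional F R],
      finrank F R ≤ n → ∀ u : R, IsUnit u → ∃ r : R, r * r = u := by
  intro n
  induction n with
  | zero =>
    intro R _ _ _ hrank u hu
    haveI : Subsingleton R := by
      rcases subsingleton_or_nontrivial R with h | h
      · exact h
      · exact absurd (Module.finrank_pos (R := F) (M := R)) (by omega)
    exact ⟨0, Subsingleton.elim _ _⟩
  | succ n ih =>
    intro R _ _ _ hrank u hu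
    rcases subsingleton_or_nontrivial R with hss | hnt
    · exact ⟨0, Subsingleton.elim _ _⟩
    by_cases hid : ∀ p : R, p*p = p → p = 0 ∨ p = 1
    · obtain ⟨μ, hnil⟩ := exists_scalar_nilpotent (F := F) hid u
      have hμ : μ ≠ 0 := by
        rintro rfl
        simp only [map_zero, sub_zero] at hnil
        exact hu.not_isNilpotent hnil
      have h2R : IsUnit (2:R) := by
        have h := (isUnit_iff_ne_zero.mpr h2).map (algebraMap F R)
        rwa [map_ofNat] at h
      have hnil' : IsNilpotent (μ⁻¹ • (u - algebraMap F R μ)) := hnil.smul _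
      obtain ⟨m, hmnil, hm⟩ := nil_sqrt_exists h2R hnil'
      obtain ⟨ν, hν⟩ := IsAlgClosed.exists_pow_nat_eq μ (n := 2) zero_lt_two
      have key : algebraMap F R μ * (1 + μ⁻¹ • (u - algebraMap F R μ)) = u := by
        rw [mul_add, mul_one, ← Algebra.smul_def, smul_smul, mul_inv_cancel₀ hμ, one_smul]
        ring
      refine ⟨algebraMap F R ν * (1+m), ?_⟩
      calc algebraMap F R ν * (1+m) * (algebraMap F R ν * (1+m))
          = (algebraMap F R ν * algebraMap F R ν) * ((1+m)*(1+m)) := by ring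
        _ = algebraMap F R μ * (1 + μ⁻¹ • (u - algebraMap F R μ)) := by
            rw [← map_mul, ← pow_two, hν, hm]
        _ = u := key
    · push_neg at hid
      obtain ⟨p, hp, hp0, hp1⟩ := hid
      haveI := quot_findim F (Ideal.span {p})
      haveI := quot_findim F (Ideal.span {1-p})
      have hrank1 : finrank F (R ⧸ Ideal.span {p}) ≤ n := by
        have := quot_rank_lt F hp0; omega
      have hrank2 : finrank F (R ⧸ Ideal.span {1-p}) ≤ n := by
        have := quot_rank_lt F (q := 1-p) (fun hq => hp1 (by linear_combination -hq)); omega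
      obtain ⟨r₁, hr₁⟩ := ih _ hrank1 _ (hu.map (Ideal.Quotient.mk _))
      obtain ⟨r₂, hr₂⟩ := ih _ hrank2 _ (hu.map (Ideal.Quotient.mk _))
      obtain ⟨y, hy₁, hy₂⟩ := quot_pair_lift r₁ r₂
      refine ⟨y, ?_⟩
      have e1 : Ideal.Quotient.mk (Ideal.span {p}) (y*y - u) = 0 := by
        rw [map_sub, map_mul, hy₁, hr₁, sub_self]
      have e2 : Ideal.Quotient.mk (Ideal.span {1-p}) (y*y - u) = 0 := by
        rw [map_sub, map_mul, hy₂, hr₂, sub_self]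
      exact sub_eq_zero.mp (quot_pair_inj hp e1 e2)
lemma unitary_fourth_root {F : Type u} [Field F] [IsAlgClosed F] (h2 : (2:F) ≠ 0) :
    ∀ (n : ℕ) (R : Type v) [CommRing R] [Algebra F R] [FiniteDimensional F R],
      finrank F R ≤ n →
      ∀ (τ : R →+* R), (∀ c : F, τ (algebraMap F R c) = algebraMap F R c) →
      (∀ a : R, τ (τ a) = a) →
      ∀ u : R, IsUnit u → τ u * u = 1 →
      ∃ w : R, τ w * w = 1 ∧ w^4 * u^2 = 1 := by
  intro n
  induction n with
  | zero =>
    intro R _ _ _ hrank τ hτF hττ u hu he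
    haveI : Subsingleton R := by
      rcases subsingleton_or_nontrivial R with h | h
      · exact h
      · exact absurd (Module.finrank_pos (R := F) (M := R)) (by omega)
    exact ⟨1, Subsingleton.elim _ _, Subsingleton.elim _ _⟩
  | succ n ih =>
    intro R _ _ _ hrank τ hτF hττ u hu he
    rcases subsingleton_or_nontrivial R with hss | hnt
    · exact ⟨1, Subsingleton.elim _ _, Subsingleton.elim _ _⟩
    have h2R : IsUnit (2:R) := by
      have h := (isUnit_iff_ne_zero.mpr h2).map (algebraMap F R)
      rwa [map_ofNat] at h
    by_cases hinv : ∃ p : R, p*p = p ∧ τ p = p ∧ p ≠ 0 ∧ p ≠ 1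
    · -- invariant idempotent : split and recurse
      obtain ⟨p, hp, hτp, hp0, hp1⟩ := hinv
      have hII : (Ideal.span {p}) ≤ (Ideal.span {p}).comap τ := by
        rw [Ideal.span_le, Set.singleton_subset_iff]
        refine Ideal.mem_comap.mpr ?_
        rw [hτp]
        exact Ideal.mem_span_singleton_self p
      have hJJ : (Ideal.span {1-p}) ≤ (Ideal.span {1-p}).comap τ := by
        rw [Ideal.span_le, Set.singleton_subset_iff]
        refine Ideal.mem_comap.mpr ?_
        rw [show τ (1-p) = 1-p from by rw [map_sub, map_one, hτp]]
        exact Ideal.mem_span_singleton_self (1-p)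
      haveI := quot_findim F (Ideal.span {p})
      haveI := quot_findim F (Ideal.span {1-p})
      have hrank1 : finrank F (R ⧸ (Ideal.span {p})) ≤ n := by
        have := quot_rank_lt F hp0; omega
      have hrank2 : finrank F (R ⧸ (Ideal.span {1-p})) ≤ n := by
        have := quot_rank_lt F (q := 1-p) (fun hq => hp1 (by linear_combination -hq))
        omega
      set τ₁ : R ⧸ (Ideal.span {p}) →+* R ⧸ (Ideal.span {p}) := Ideal.quotientMap (Ideal.span {p}) τ hII with hτ₁def
      set τ₂ : R ⧸ (Ideal.span {1-p}) →+* R ⧸ (Ideal.span {1-p}) := Ideal.quotientMap (Ideal.span {1-p}) τ hJJ with hτ₂def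
      have hτ₁mk : ∀ a : R, τ₁ (Ideal.Quotient.mk (Ideal.span {p}) a) = Ideal.Quotient.mk (Ideal.span {p}) (τ a) :=
        fun a => Ideal.quotientMap_mk
      have hτ₂mk : ∀ a : R, τ₂ (Ideal.Quotient.mk (Ideal.span {1-p}) a) = Ideal.Quotient.mk (Ideal.span {1-p}) (τ a) :=
        fun a => Ideal.quotientMap_mk
      obtain ⟨w₁, hw₁a, hw₁b⟩ := ih (R ⧸ (Ideal.span {p})) hrank1 τ₁
        (fun c => by rw [← Ideal.Quotient.mk_algebraMap, hτ₁mk, hτF, Ideal.Quotient.mk_algebraMap])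
        (fun a => by
          obtain ⟨b, rfl⟩ := Ideal.Quotient.mk_surjective a
          rw [hτ₁mk, hτ₁mk, hττ])
        (Ideal.Quotient.mk (Ideal.span {p}) u) (hu.map _)
        (by rw [hτ₁mk, ← map_mul, he, map_one])
      obtain ⟨w₂, hw₂a, hw₂b⟩ := ih (R ⧸ (Ideal.span {1-p})) hrank2 τ₂
        (fun c => by rw [← Ideal.Quotient.mk_algebraMap, hτ₂mk, hτF, Ideal.Quotient.mk_algebraMap])
        (fun a => by
          obtain ⟨b, rfl⟩ := Ideal.Quotient.mk_surjective a
          rw [hτ₂mk, hτ₂mk, hττ])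
        (Ideal.Quotient.mk (Ideal.span {1-p}) u) (hu.map _)
        (by rw [hτ₂mk, ← map_mul, he, map_one])
      obtain ⟨w, hwI, hwJ⟩ := quot_pair_lift w₁ w₂
      refine ⟨w, ?_, ?_⟩
      · refine sub_eq_zero.mp (quot_pair_inj hp ?_ ?_)
        · rw [map_sub, map_mul, map_one, ← hτ₁mk, hwI, hw₁a, sub_self]
        · rw [map_sub, map_mul, map_one, ← hτ₂mk, hwJ, hw₂a, sub_self]
      · refine sub_eq_zero.mp (quot_pair_inj hp ?_ ?_)
        · rw [map_sub, map_mul, map_pow, map_pow, map_one, hwI, hw₁b, sub_self]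
        · rw [map_sub, map_mul, map_pow, map_pow, map_one, hwJ, hw₂b, sub_self]
    · by_cases hex : ∃ p : R, p*p = p ∧ p ≠ 0 ∧ p ≠ 1
      · -- swapped idempotent pair
        obtain ⟨p, hp, hp0, hp1⟩ := hex
        push_neg at hinv
        have hq : τ p * τ p = τ p := by rw [← map_mul, hp]
        have hpq0 : p * τ p = 0 := by
          by_contra hne
          have hidem : (p * τ p) * (p * τ p) = p * τ p := by
            calc (p * τ p) * (p * τ p) = (p*p) * (τ p * τ p) := by ring
              _ = p * τ p := by rw [hp, hq]
          have hfix : τ (p * τ p) = p * τ p := by rw [map_mul, hττ, mul_comm]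
          have h1 := hinv _ hidem hfix hne
          -- p * τ p = 1 forces p = 1
          apply hp1
          have hup : IsUnit p := IsUnit.of_mul_eq_one (a := p) (τ p) h1
          have := hup.mul_left_cancel (by rw [hp, mul_one] : p * p = p * 1)
          exact this
        have hsum : p + τ p = 1 := by
          have hidem : (p + τ p) * (p + τ p) = p + τ p := by
            calc (p + τ p) * (p + τ p) = p*p + τ p * τ p + 2*(p*τ p) := by ring
              _ = p + τ p := by rw [hp, hq, hpq0]; ring
          have hfix : τ (p + τ p) = p + τ p := by rw [map_add, hττ, add_comm]
          have hne : p + τ p ≠ 0 := by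
            intro h0
            have hqp : τ p = -p := by linear_combination h0
            have : p = -p := by
              calc p = p * p := hp.symm
                _ = τ p * τ p := by rw [hqp]; ring
                _ = τ (p*p) := (map_mul τ p p).symm
                _ = τ p := by rw [hp]
                _ = -p := hqp
            have h2p : 2 * p = 0 := by linear_combination this
            obtain ⟨v, hv⟩ := h2R.exists_right_inv
            apply hp0
            linear_combination (-p) * hv + v * h2p
          exact hinv _ hidem hfix hne
        have hτp : τ p = 1 - p := by linear_combination hsum
        have hIJ : (Ideal.span {p}) ≤ (Ideal.span {1-p}).comap τ := by
          rw [Ideal.span_le, Set.singleton_subset_iff]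
          refine Ideal.mem_comap.mpr ?_
          rw [hτp]
          exact Ideal.mem_span_singleton_self (1-p)
        have hJI : (Ideal.span {1-p}) ≤ (Ideal.span {p}).comap τ := by
          rw [Ideal.span_le, Set.singleton_subset_iff]
          refine Ideal.mem_comap.mpr ?_
          rw [show τ (1-p) = p from by rw [map_sub, map_one, hτp]; ring]
          exact Ideal.mem_span_singleton_self p
        haveI := quot_findim F (Ideal.span {p})
        haveI := quot_findim F (Ideal.span {1-p})
        set τ₁₂ : R ⧸ (Ideal.span {p}) →+* R ⧸ (Ideal.span {1-p}) := Ideal.quotientMap (Ideal.span {1-p}) τ hIJ with hτ₁₂def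
        set τ₂₁ : R ⧸ (Ideal.span {1-p}) →+* R ⧸ (Ideal.span {p}) := Ideal.quotientMap (Ideal.span {p}) τ hJI with hτ₂₁def
        have hτ₁₂mk : ∀ a : R, τ₁₂ (Ideal.Quotient.mk (Ideal.span {p}) a) = Ideal.Quotient.mk (Ideal.span {1-p}) (τ a) :=
          fun a => Ideal.quotientMap_mk
        have hτ₂₁mk : ∀ a : R, τ₂₁ (Ideal.Quotient.mk (Ideal.span {1-p}) a) = Ideal.Quotient.mk (Ideal.span {p}) (τ a) :=
          fun a => Ideal.quotientMap_mk
        set u₁ : R ⧸ (Ideal.span {p}) := Ideal.Quotient.mk (Ideal.span {p}) u with hu₁def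
        set u₂ : R ⧸ (Ideal.span {1-p}) := Ideal.Quotient.mk (Ideal.span {1-p}) u with hu₂def
        have hu₁ : IsUnit u₁ := hu.map _
        obtain ⟨u₁', hu₁'⟩ := hu₁.exists_right_inv
        have hu₁'unit : IsUnit (u₁' * u₁') := by
          refine IsUnit.of_mul_eq_one (u₁ * u₁) ?_
          calc u₁' * u₁' * (u₁ * u₁) = (u₁ * u₁') * (u₁ * u₁') := by ring
            _ = 1 := by rw [hu₁']; ring
        obtain ⟨t₁, ht₁⟩ := sqrt_exists h2 (finrank F (R ⧸ (Ideal.span {p}))) (R ⧸ (Ideal.span {p})) le_rfl _ hu₁'unit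
        have ht₁unit : IsUnit t₁ := by
          refine IsUnit.of_mul_eq_one (t₁ * (u₁ * u₁)) ?_
          calc t₁ * (t₁ * (u₁*u₁)) = (t₁*t₁) * (u₁*u₁) := by ring
            _ = (u₁'*u₁') * (u₁*u₁) := by rw [ht₁]
            _ = (u₁ * u₁') * (u₁ * u₁') := by ring
            _ = 1 := by rw [hu₁']; ring
        obtain ⟨w₁, hw₁⟩ := sqrt_exists h2 (finrank F (R ⧸ (Ideal.span {p}))) (R ⧸ (Ideal.span {p})) le_rfl _ ht₁unit
        have hw₁4 : w₁^4 * u₁^2 = 1 := by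
          calc w₁^4 * u₁^2 = ((w₁*w₁)*(w₁*w₁)) * (u₁*u₁) := by ring
            _ = (t₁*t₁) * (u₁*u₁) := by rw [hw₁]
            _ = (u₁'*u₁') * (u₁*u₁) := by rw [ht₁]
            _ = (u₁ * u₁') * (u₁ * u₁') := by ring
            _ = 1 := by rw [hu₁']; ring
        set w₁inv : R ⧸ (Ideal.span {p}) := w₁^3 * u₁^2 with hw₁invdef
        have hw₁w₁inv : w₁ * w₁inv = 1 := by
          rw [hw₁invdef, ← hw₁4]; ring
        set w₂ : R ⧸ (Ideal.span {1-p}) := τ₁₂ w₁inv with hw₂def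
        obtain ⟨w, hwI, hwJ⟩ := quot_pair_lift w₁ w₂
        have hcomp : ∀ a : R ⧸ (Ideal.span {p}), τ₂₁ (τ₁₂ a) = a := by
          intro a
          obtain ⟨b, rfl⟩ := Ideal.Quotient.mk_surjective a
          rw [hτ₁₂mk, hτ₂₁mk, hττ]
        have hτu : τ₁₂ u₁ * u₂ = 1 := by
          rw [hu₁def, hτ₁₂mk, hu₂def, ← map_mul, he, map_one]
        refine ⟨w, ?_, ?_⟩
        · refine sub_eq_zero.mp (quot_pair_inj hp ?_ ?_)
          · rw [map_sub, map_mul, map_one]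
            have : Ideal.Quotient.mk (Ideal.span {p}) (τ w) = τ₂₁ w₂ := by rw [← hτ₂₁mk, hwJ]
            rw [this, hw₂def, hcomp, hwI, mul_comm, hw₁w₁inv, sub_self]
          · rw [map_sub, map_mul, map_one]
            have : Ideal.Quotient.mk (Ideal.span {1-p}) (τ w) = τ₁₂ w₁ := by rw [← hτ₁₂mk, hwI]
            rw [this, hwJ, hw₂def, ← map_mul, hw₁w₁inv, map_one, sub_self]
        · refine sub_eq_zero.mp (quot_pair_inj hp ?_ ?_)
          · rw [map_sub, map_mul, map_pow, map_pow, map_one, hwI, ← hu₁def, hw₁4, sub_self]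
          · rw [map_sub, map_mul, map_pow, map_pow, map_one, hwJ, ← hu₂def, hw₂def]
            have hw₁inv4 : w₁inv^4 = u₁^2 := by
              have h1 : w₁^4 * w₁inv^4 = 1 := by
                calc w₁^4 * w₁inv^4 = (w₁*w₁inv)^4 := by ring
                  _ = 1 := by rw [hw₁w₁inv]; ring
              calc w₁inv^4 = (w₁^4 * u₁^2) * w₁inv^4 := by rw [hw₁4, one_mul]
                _ = (w₁^4 * w₁inv^4) * u₁^2 := by ring
                _ = u₁^2 := by rw [h1, one_mul]
            rw [← map_pow, hw₁inv4, map_pow]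
            calc (τ₁₂ u₁)^2 * u₂^2 - 1 = (τ₁₂ u₁ * u₂)^2 - 1 := by ring
              _ = 0 := by rw [hτu]; ring
      · -- no nontrivial idempotents : local case
        push_neg at hex
        have hid : ∀ p : R, p*p = p → p = 0 ∨ p = 1 := by
          intro p hpp
          by_cases h0 : p = 0
          · exact Or.inl h0
          · exact Or.inr (hex p hpp h0)
        obtain ⟨μ, hnil⟩ := exists_scalar_nilpotent (F := F) hid u
        set nn : R := u - algebraMap F R μ with hnndef
        have hτnil : IsNilpotent (τ nn) := hnil.map τ
        have hμμ : μ * μ = 1 := by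
          by_contra hne
          have hnil2 : IsNilpotent (algebraMap F R (μ*μ - 1)) := by
            have expand : algebraMap F R (μ*μ - 1) =
                - (algebraMap F R μ * (nn + τ nn) + τ nn * nn) := by
              have hτu : τ u = algebraMap F R μ + τ nn := by
                rw [hnndef, map_sub, hτF]; ring
              have hu' : u = algebraMap F R μ + nn := by rw [hnndef]; ring
              have hmul : (algebraMap F R μ + τ nn) * (algebraMap F R μ + nn) = 1 := by
                rw [← hτu, ← hu']; exact he
              rw [map_sub, map_mul, map_one]
              linear_combination hmul
            rw [expand]
            have hsum : IsNilpotent (nn + τ nn) :=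
              Commute.isNilpotent_add (Commute.all _ _) hnil hτnil
            have t1 : IsNilpotent (algebraMap F R μ * (nn + τ nn)) :=
              (Commute.all _ _).isNilpotent_mul_left hsum
            have t2 : IsNilpotent (τ nn * nn) :=
              (Commute.all _ _).isNilpotent_mul_right hτnil
            exact (Commute.isNilpotent_add (Commute.all _ _) t1 t2).neg
          have hunit : IsUnit (algebraMap F R (μ*μ-1)) :=
            (isUnit_iff_ne_zero.mpr (sub_ne_zero.mpr hne)).map _
          exact hunit.not_isNilpotent hnil2
        have hμcases : μ = 1 ∨ μ = -1 := mul_self_eq_one_iff.mp hμμ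
        set v : R := algebraMap F R μ * u with hvdef
        have haμ : algebraMap F R μ * algebraMap F R μ = 1 := by
          rw [← map_mul, hμμ, map_one]
        have hv1 : v = 1 + μ • nn := by
          rw [hvdef, hnndef, Algebra.smul_def]
          linear_combination haμ
        have hnv : IsNilpotent (μ • nn) := hnil.smul _
        obtain ⟨m, hmnil, hm⟩ := nil_sqrt_exists h2R hnv
        have hmv : (1+m)*(1+m) = v := by rw [hm, ← hv1]
        have hτv : τ v * v = 1 := by
          rw [hvdef, map_mul, hτF]
          calc algebraMap F R μ * τ u * (algebraMap F R μ * u)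
              = (algebraMap F R μ * algebraMap F R μ) * (τ u * u) := by ring
            _ = 1 := by rw [haμ, he, mul_one]
        have hv2 : v^2 = u^2 := by
          rw [hvdef]
          calc (algebraMap F R μ * u)^2 = (algebraMap F R μ * algebraMap F R μ) * u^2 := by ring
            _ = u^2 := by rw [haμ, one_mul]
        have humunit : IsUnit (1+m) := hmnil.isUnit_one_add
        obtain ⟨w, hw⟩ := humunit.exists_right_inv
        have hwm : IsNilpotent (w - 1) := by
          have : w - 1 = -(m * w) := by linear_combination hw
          rw [this]
          exact ((Commute.all m w).isNilpotent_mul_right hmnil).neg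
        have hkey : τ (1+m) = w := by
          have e1 : (1 + τ m) * (1 + τ m) * v = 1 := by
            have : τ ((1+m)*(1+m)) * v = τ v * v := by rw [hmv]
            rw [map_mul] at this
            calc (1 + τ m) * (1 + τ m) * v = τ (1+m) * τ (1+m) * v := by rw [map_add, map_one]
              _ = τ v * v := this
              _ = 1 := hτv
          have e2 : (1 + (w-1)) * (1 + (w-1)) * v = 1 := by
            have : (1 + (w-1)) = w := by ring
            rw [this, ← hmv]
            calc w * w * ((1+m)*(1+m)) = ((1+m)*w) * ((1+m)*w) := by ring
              _ = 1 := by rw [hw, one_mul]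
          have hvunit : IsUnit v := by
            refine IsUnit.of_mul_eq_one (a := v) (τ v) ?_
            rw [mul_comm]; exact hτv
          obtain ⟨v', hv'⟩ := hvunit.exists_right_inv
          have e3 : (1 + τ m) * (1 + τ m) = (1 + (w-1)) * (1 + (w-1)) := by
            calc (1 + τ m) * (1 + τ m) = (1 + τ m) * (1 + τ m) * (v * v') := by rw [hv', mul_one]
              _ = ((1 + τ m) * (1 + τ m) * v) * v' := by ring
              _ = ((1 + (w-1)) * (1 + (w-1)) * v) * v' := by rw [e1, e2]
              _ = (1 + (w-1)) * (1 + (w-1)) * (v * v') := by ring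
              _ = (1 + (w-1)) * (1 + (w-1)) := by rw [hv', mul_one]
          have heq := nil_sqrt_unique h2R (hmnil.map τ) hwm e3
          rw [map_add, map_one, heq]
          ring
        refine ⟨w, ?_, ?_⟩
        · have : τ ((1+m) * w) = 1 := by rw [hw, map_one]
          rw [map_mul, hkey] at this
          calc τ w * w = w * τ w := mul_comm _ _
            _ = 1 := this
        · have hwv : w^2 * v = 1 := by
            rw [← hmv]
            calc w^2 * ((1+m)*(1+m)) = ((1+m)*w)*((1+m)*w) := by ring
              _ = 1 := by rw [hw, one_mul]
          calc w^4 * u^2 = w^4 * v^2 := by rw [hv2]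
            _ = (w^2 * v)^2 := by ring
            _ = 1 := by rw [hwv, one_pow]

section Helpers

lemma subalg_inv {F : Type u} {A : Type v} [Field F] [Ring A] [Algebra F A]
    [FiniteDimensional F A] (S : Subalgebra F A) (a : A) (ha : a ∈ S) (hu : IsUnit a) :
    ∃ b : A, b ∈ S ∧ a * b = 1 ∧ b * a = 1 := by
  obtain ⟨U, hU⟩ := hu
  set f : S →ₗ[F] S := LinearMap.mulLeft F (⟨a, ha⟩ : S) with hf
  have hinj : Function.Injective f := by
    intro y z hyz
    have hyz' : (a * (y:A) : A) = a * (z:A) := congrArg Subtype.val hyz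
    apply Subtype.ext
    calc (y:A) = (↑U⁻¹:A) * (a * (y:A)) := by rw [← hU, ← mul_assoc, Units.inv_mul, one_mul]
      _ = (↑U⁻¹:A) * (a * (z:A)) := by rw [hyz']
      _ = (z:A) := by rw [← hU, ← mul_assoc, Units.inv_mul, one_mul]
  obtain ⟨c, hc⟩ := (LinearMap.injective_iff_surjective.mp hinj) 1
  have hc' : a * (c:A) = 1 := congrArg Subtype.val hc
  refine ⟨(c:A), c.2, hc', ?_⟩
  calc (c:A) * a = (↑U⁻¹:A) * (a * ((c:A) * a)) := by
        rw [← hU, ← mul_assoc, Units.inv_mul, one_mul]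
    _ = (↑U⁻¹:A) * a := by rw [← mul_assoc a, hc', one_mul]
    _ = 1 := by rw [← hU, Units.inv_mul]

lemma adjoin_comm {F : Type u} {A : Type v} [Field F] [Ring A] [Algebra F A]
    (a t : A) (hat : a * t = t * a) :
    ∀ b ∈ Algebra.adjoin F ({a} : Set A), b * t = t * b := by
  intro b hb
  induction hb using Algebra.adjoin_induction with
  | mem x hx => rw [Set.mem_singleton_iff] at hx; subst hx; exact hat
  | algebraMap r => exact Algebra.commutes r t
  | add x y hx hy ihx ihy => rw [add_mul, ihx, ihy, mul_add]
  | mul x y hx hy ihx ihy => rw [mul_assoc, ihy, ← mul_assoc, ihx, mul_assoc]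

lemma adjoin_selfcomm {F : Type u} {A : Type v} [Field F] [Ring A] [Algebra F A] (a : A) :
    ∀ b ∈ Algebra.adjoin F ({a} : Set A), ∀ c ∈ Algebra.adjoin F ({a} : Set A),
      b * c = c * b := by
  intro b hb c hc
  have hac : a * c = c * a := (adjoin_comm a a rfl c hc).symm
  exact adjoin_comm a c hac b hb

lemma s_fixes_adjoin {F : Type u} {A : Type v} [Field F] [Ring A] [Algebra F A]
    (s : A →ₗ[F] A) (hmul : ∀ a b : A, s (a * b) = s b * s a) (s1 : s 1 = 1)
    (a : A) (hsa : s a = a) :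
    ∀ b ∈ Algebra.adjoin F ({a} : Set A), s b = b := by
  intro b hb
  induction hb using Algebra.adjoin_induction with
  | mem x hx => rw [Set.mem_singleton_iff] at hx; subst hx; exact hsa
  | algebraMap r => rw [Algebra.algebraMap_eq_smul_one, map_smul, s1]
  | add x y hx hy ihx ihy => rw [map_add, ihx, ihy]
  | mul x y hx hy ihx ihy =>
    rw [hmul, ihx, ihy]
    exact adjoin_selfcomm a y hy x hx

lemma s_maps_adjoin {F : Type u} {A : Type v} [Field F] [Ring A] [Algebra F A]
    (s : A →ₗ[F] A) (hmul : ∀ a b : A, s (a * b) = s b * s a) (s1 : s 1 = 1)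
    (a : A) (hsa : s a ∈ Algebra.adjoin F ({a} : Set A)) :
    ∀ b ∈ Algebra.adjoin F ({a} : Set A), s b ∈ Algebra.adjoin F ({a} : Set A) := by
  intro b hb
  induction hb using Algebra.adjoin_induction with
  | mem x hx => rw [Set.mem_singleton_iff] at hx; subst hx; exact hsa
  | algebraMap r =>
    rw [Algebra.algebraMap_eq_smul_one, map_smul, s1]
    exact Subalgebra.smul_mem _ (one_mem _) r
  | add x y hx hy ihx ihy => rw [map_add]; exact add_mem ihx ihy
  | mul x y hx hy ihx ihy => rw [hmul]; exact mul_mem ihy ihx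

end Helpers

theorem unitary_splits_order_four {F : Type*} [Field F] [IsAlgClosed F] (h2 : (2 : F) ≠ 0)
    {A : Type*} [Ring A] [Algebra F A] [FiniteDimensional F A]
    (s : A →ₗ[F] A) (hmul : ∀ a b : A, s (a * b) = s b * s a) (hinv : ∀ a : A, s (s a) = a)
    (x : Aˣ) (hx : s (x : A) * (x : A) = 1)
    (h : ∃ z : Aˣ, (z : A) * (x : A) * (↑z⁻¹ : A) = (↑x⁻¹ : A)) :
    ∃ y z : Aˣ, s (y : A) * (y : A) = 1 ∧ s (z : A) * (z : A) = 1 ∧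
      y ^ 4 = 1 ∧ z ^ 4 = 1 ∧ x = y * z := by
  obtain ⟨g, hg⟩ := h
  have s1 : s 1 = 1 := by
    have h1 := hmul (s 1) 1
    rw [mul_one, hinv] at h1
    simpa using h1.symm
  have eqinvl : ∀ (U : Aˣ) (t : A), t * (U:A) = 1 → t = (↑U⁻¹:A) := by
    intro U t ht
    calc t = t * ((U:A) * (↑U⁻¹:A)) := by rw [Units.mul_inv, mul_one]
      _ = t * (U:A) * (↑U⁻¹:A) := by rw [mul_assoc]
      _ = (↑U⁻¹:A) := by rw [ht, one_mul]
  have eqinvr : ∀ (U : Aˣ) (t : A), (U:A) * t = 1 → t = (↑U⁻¹:A) := by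
    intro U t ht
    calc t = (↑U⁻¹:A) * ((U:A) * t) := by rw [← mul_assoc, Units.inv_mul, one_mul]
      _ = (↑U⁻¹:A) := by rw [ht, mul_one]
  have invcomm : ∀ (U : Aˣ) (t : A), t * (U:A) = (U:A) * t → t * (↑U⁻¹:A) = (↑U⁻¹:A) * t := by
    intro U t htU
    have h1 : (↑U⁻¹:A) * ((t * (U:A)) * (↑U⁻¹:A)) = t * (↑U⁻¹:A) := by
      rw [htU, ← mul_assoc, ← mul_assoc, Units.inv_mul, one_mul]
    have h2 : (↑U⁻¹:A) * ((t * (U:A)) * (↑U⁻¹:A)) = (↑U⁻¹:A) * t := by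
      rw [mul_assoc, Units.mul_inv, mul_one]
    rw [← h1, h2]
  have sx : s (x:A) = (↑x⁻¹:A) := eqinvl x _ hx
  have sxinv : s ((↑x⁻¹:A)) = (x:A) := by rw [← sx, hinv]
  have hsg1 : s (g:A) * s ((↑g⁻¹:A)) = 1 := by rw [← hmul, Units.inv_mul, s1]
  have hsg2 : s ((↑g⁻¹:A)) * s (g:A) = 1 := by rw [← hmul, Units.mul_inv, s1]
  set sgU : Aˣ := ⟨s (g:A), s ((↑g⁻¹:A)), hsg1, hsg2⟩ with hsgUdef
  have hgx : (g:A) * (x:A) = (↑x⁻¹:A) * (g:A) := by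
    calc (g:A) * (x:A) = (g:A) * (x:A) * ((↑g⁻¹:A) * (g:A)) := by
          rw [Units.inv_mul, mul_one]
      _ = ((g:A) * (x:A) * (↑g⁻¹:A)) * (g:A) := by rw [← mul_assoc]
      _ = (↑x⁻¹:A) * (g:A) := by rw [hg]
  have hsgx : (↑x⁻¹:A) * s (g:A) = s (g:A) * (x:A) := by
    have h1 := congrArg s hgx
    rw [hmul, hmul, sxinv, sx] at h1
    exact h1
  have hsgx2 : s (g:A) * (↑x⁻¹:A) = (x:A) * s (g:A) := by
    calc s (g:A) * (↑x⁻¹:A) = ((x:A) * ((↑x⁻¹:A) * s (g:A))) * (↑x⁻¹:A) := by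
          rw [← mul_assoc, Units.mul_inv, one_mul]
      _ = ((x:A) * (s (g:A) * (x:A))) * (↑x⁻¹:A) := by rw [hsgx]
      _ = (x:A) * s (g:A) := by
          rw [← mul_assoc, mul_assoc ((x:A) * s (g:A)), Units.mul_inv, mul_one]
  set dA : A := s (g:A) * (g:A) with hdA
  set dU : Aˣ := sgU * g with hdUdef
  have hdUval : (dU:A) = dA := rfl
  have hdx : dA * (x:A) = (x:A) * dA := by
    calc dA * (x:A) = s (g:A) * ((g:A) * (x:A)) := by rw [hdA, mul_assoc]
      _ = s (g:A) * ((↑x⁻¹:A) * (g:A)) := by rw [hgx]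
      _ = (s (g:A) * (↑x⁻¹:A)) * (g:A) := by rw [mul_assoc]
      _ = ((x:A) * s (g:A)) * (g:A) := by rw [hsgx2]
      _ = (x:A) * dA := by rw [hdA, mul_assoc]
  have hsd : s dA = dA := by
    rw [hdA, hmul (s (g:A)) (g:A), hinv]
  -- the commutative subalgebra S₁ = F[dA]
  letI : CommRing (Algebra.adjoin F ({dA} : Set A)) :=
    Algebra.adjoinCommRingOfComm F (by
      intro a ha b hb
      rw [Set.mem_singleton_iff] at ha hb; subst ha; subst hb; rfl)
  have hdmem : dA ∈ Algebra.adjoin F ({dA} : Set A) := Algebra.self_mem_adjoin_singleton F dA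
  obtain ⟨dinv, hdinvmem, hdd1, hdd2⟩ :=
    subalg_inv (Algebra.adjoin F ({dA} : Set A)) dA hdmem ⟨dU, hdUval⟩
  have hdS : IsUnit (⟨dA, hdmem⟩ : Algebra.adjoin F ({dA} : Set A)) := by
    refine IsUnit.of_mul_eq_one ⟨dinv, hdinvmem⟩ (Subtype.ext ?_)
    show dA * dinv = 1
    exact hdd1
  obtain ⟨r₁, hr₁⟩ := sqrt_exists h2 (Module.finrank F (Algebra.adjoin F ({dA} : Set A)))
    (Algebra.adjoin F ({dA} : Set A)) le_rfl _ hdS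
  set rA : A := ↑r₁ with hrAdef
  have hrmem : rA ∈ Algebra.adjoin F ({dA} : Set A) := r₁.2
  have hrr : rA * rA = dA := congrArg Subtype.val hr₁
  have hScomm : ∀ a b : A, a ∈ Algebra.adjoin F ({dA} : Set A) →
      b ∈ Algebra.adjoin F ({dA} : Set A) → a * b = b * a := by
    intro a b ha hb
    exact congrArg Subtype.val (mul_comm (⟨a, ha⟩ : Algebra.adjoin F ({dA} : Set A)) ⟨b, hb⟩)
  set rU : Aˣ := ⟨rA, rA * dinv, by rw [← mul_assoc, hrr, hdd1], by
    rw [hScomm rA dinv hrmem hdinvmem, mul_assoc, hrr, hdd2]⟩ with hrUdef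
  have hsfix : ∀ b ∈ Algebra.adjoin F ({dA} : Set A), s b = b :=
    s_fixes_adjoin s hmul s1 dA hsd
  have hsr : s rA = rA := hsfix rA hrmem
  have hcommx : ∀ b ∈ Algebra.adjoin F ({dA} : Set A), b * (x:A) = (x:A) * b :=
    adjoin_comm dA (x:A) hdx
  have hrx : rA * (x:A) = (x:A) * rA := hcommx rA hrmem
  have hrUinv : (↑rU⁻¹:A) = rA * dinv := rfl
  have hrUval : (rU:A) = rA := rfl
  have hrUinvmem : (↑rU⁻¹:A) ∈ Algebra.adjoin F ({dA} : Set A) := by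
    rw [hrUinv]; exact mul_mem hrmem hdinvmem
  set y₀ : Aˣ := g * rU⁻¹ with hy₀def
  have hy₀val : (y₀:A) = (g:A) * (↑rU⁻¹:A) := rfl
  have hy₀inv : (↑y₀⁻¹:A) = rA * (↑g⁻¹:A) := by
    rw [hy₀def, mul_inv_rev, inv_inv]
    simp [Units.val_mul, hrUval]
  have hsgval : s (g:A) = dA * (↑g⁻¹:A) := by
    rw [hdA, mul_assoc, Units.mul_inv, mul_one]
  have hsy₀ : s (y₀:A) = (↑y₀⁻¹:A) := by
    rw [hy₀val, hmul, hsfix _ hrUinvmem, hy₀inv, hrUinv, hsgval]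
    rw [← mul_assoc, mul_assoc rA dinv dA, hdd2, mul_one]
  have hgU : g * x * g⁻¹ = x⁻¹ := Units.ext (by simpa [Units.val_mul] using hg)
  have hrxU : rU * x = x * rU := Units.ext (by simpa [Units.val_mul, hrUval] using hrx)
  have hcomr : Commute rU x := hrxU
  have hy₀xU : y₀ * x * y₀⁻¹ = x⁻¹ := by
    rw [hy₀def]
    have h1 : rU⁻¹ * x * rU = x := by
      rw [(hcomr.inv_left.eq : rU⁻¹ * x = x * rU⁻¹)]
      group
    calc g * rU⁻¹ * x * (g * rU⁻¹)⁻¹ = g * (rU⁻¹ * x * rU) * g⁻¹ := by group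
      _ = g * x * g⁻¹ := by rw [h1]
      _ = x⁻¹ := hgU
  set eU : Aˣ := y₀ * y₀ with heUdef
  set eA : A := (eU : A) with heAdef
  have heAval : eA = (y₀:A) * (y₀:A) := rfl
  have hsy₀inv : s ((↑y₀⁻¹:A)) = (y₀:A) := by rw [← hsy₀, hinv]
  have hse : s eA = (↑eU⁻¹:A) := by
    rw [heAval, hmul, hsy₀, heUdef]
    simp [Units.val_mul, mul_inv_rev]
  have hexU : eU * x = x * eU := by
    have h1 : y₀ * x = x⁻¹ * y₀ := by
      calc y₀ * x = (y₀ * x * y₀⁻¹) * y₀ := by group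
        _ = x⁻¹ * y₀ := by rw [hy₀xU]
    have h2 : y₀ * x⁻¹ = x * y₀ := by
      calc y₀ * x⁻¹ = (y₀ * x * y₀⁻¹)⁻¹ * y₀ := by group
        _ = (x⁻¹)⁻¹ * y₀ := by rw [hy₀xU]
        _ = x * y₀ := by rw [inv_inv]
    rw [heUdef]
    calc (y₀ * y₀) * x = y₀ * (y₀ * x) := by group
      _ = y₀ * (x⁻¹ * y₀) := by rw [h1]
      _ = (y₀ * x⁻¹) * y₀ := by group
      _ = x * (y₀ * y₀) := by rw [h2]; group
  have hex : eA * (x:A) = (x:A) * eA := by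
    simpa [Units.val_mul] using congrArg Units.val hexU
  have hey₀ : eA * (y₀:A) = (y₀:A) * eA := by
    rw [heAval, mul_assoc]
  -- S₂ = F[eA]
  letI : CommRing (Algebra.adjoin F ({eA} : Set A)) :=
    Algebra.adjoinCommRingOfComm F (by
      intro a ha b hb
      rw [Set.mem_singleton_iff] at ha hb; subst ha; subst hb; rfl)
  have hemem : eA ∈ Algebra.adjoin F ({eA} : Set A) := Algebra.self_mem_adjoin_singleton F eA
  obtain ⟨einv, heinvmem, hee1, hee2⟩ :=
    subalg_inv (Algebra.adjoin F ({eA} : Set A)) eA hemem ⟨eU, rfl⟩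
  have hS₂comm : ∀ a b : A, a ∈ Algebra.adjoin F ({eA} : Set A) →
      b ∈ Algebra.adjoin F ({eA} : Set A) → a * b = b * a := by
    intro a b ha hb
    exact congrArg Subtype.val (mul_comm (⟨a, ha⟩ : Algebra.adjoin F ({eA} : Set A)) ⟨b, hb⟩)
  have hsemem : s eA ∈ Algebra.adjoin F ({eA} : Set A) := by
    rw [hse, ← (eqinvr eU einv hee1)]
    exact heinvmem
  have hsS₂ : ∀ b ∈ Algebra.adjoin F ({eA} : Set A),
      s b ∈ Algebra.adjoin F ({eA} : Set A) := s_maps_adjoin s hmul s1 eA hsemem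
  set τ : Algebra.adjoin F ({eA} : Set A) →+* Algebra.adjoin F ({eA} : Set A) :=
    { toFun := fun a => ⟨s ↑a, hsS₂ _ a.2⟩
      map_one' := Subtype.ext (by show s (1:A) = 1; exact s1)
      map_mul' := fun a b => Subtype.ext (by
        show s ((a:A) * (b:A)) = s (a:A) * s (b:A)
        rw [hmul]
        exact hS₂comm _ _ (hsS₂ _ b.2) (hsS₂ _ a.2))
      map_zero' := Subtype.ext (by show s (0:A) = 0; exact map_zero s)
      map_add' := fun a b => Subtype.ext (map_add s _ _) } with hτdef
  have hτval : ∀ a : Algebra.adjoin F ({eA} : Set A), (↑(τ a) : A) = s ↑a := fun a => rfl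
  have hτF : ∀ c : F, τ (algebraMap F (Algebra.adjoin F ({eA} : Set A)) c) =
      algebraMap F (Algebra.adjoin F ({eA} : Set A)) c := by
    intro c
    apply Subtype.ext
    rw [hτval]
    show s ((algebraMap F (Algebra.adjoin F ({eA} : Set A)) c : A)) =
      (algebraMap F (Algebra.adjoin F ({eA} : Set A)) c : A)
    rw [Subalgebra.coe_algebraMap, Algebra.algebraMap_eq_smul_one, map_smul, s1]
  have hττ : ∀ a, τ (τ a) = a := fun a => Subtype.ext (hinv _)
  have heUnit : IsUnit (⟨eA, hemem⟩ : Algebra.adjoin F ({eA} : Set A)) := by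
    refine IsUnit.of_mul_eq_one ⟨einv, heinvmem⟩ (Subtype.ext ?_)
    show eA * einv = 1
    exact hee1
  have hτe : τ ⟨eA, hemem⟩ * ⟨eA, hemem⟩ = 1 := by
    apply Subtype.ext
    show s eA * eA = 1
    rw [hse, heAdef]
    exact Units.inv_mul eU
  obtain ⟨w₂, hw₂a, hw₂b⟩ := unitary_fourth_root h2
    (Module.finrank F (Algebra.adjoin F ({eA} : Set A)))
    (Algebra.adjoin F ({eA} : Set A)) le_rfl τ hτF hττ _ heUnit hτe
  set wA : A := ↑w₂ with hwAdef
  have hwmem : wA ∈ Algebra.adjoin F ({eA} : Set A) := w₂.2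
  have hswa : s wA * wA = 1 := by
    have h1 := congrArg Subtype.val hw₂a
    simpa [hτval] using h1
  have hw4 : wA^4 * eA^2 = 1 := by
    have h1 := congrArg Subtype.val hw₂b
    simpa using h1
  have hw₂inv : w₂ * (w₂^3 * (⟨eA, hemem⟩ : Algebra.adjoin F ({eA} : Set A))^2) = 1 := by
    rw [← hw₂b]; ring
  have hw₂inv' : (w₂^3 * (⟨eA, hemem⟩ : Algebra.adjoin F ({eA} : Set A))^2) * w₂ = 1 := by
    rw [← hw₂b]; ring
  set wU : Aˣ := ⟨wA, ↑(w₂^3 * (⟨eA, hemem⟩ : Algebra.adjoin F ({eA} : Set A))^2),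
    by simpa using congrArg Subtype.val hw₂inv,
    by simpa using congrArg Subtype.val hw₂inv'⟩ with hwUdef
  have hwUval : (wU:A) = wA := rfl
  have hwx : wA * (x:A) = (x:A) * wA := adjoin_comm eA (x:A) hex wA hwmem
  have hwy₀A : wA * (y₀:A) = (y₀:A) * wA := adjoin_comm eA (y₀:A) hey₀ wA hwmem
  have hwxU : wU * x = x * wU := Units.ext (by simpa [Units.val_mul, hwUval] using hwx)
  have hwy₀U : wU * y₀ = y₀ * wU := Units.ext (by simpa [Units.val_mul, hwUval] using hwy₀A)
  set y : Aˣ := y₀ * wU with hydef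
  set z : Aˣ := y⁻¹ * x with hzdef
  have hyval : (y:A) = (y₀:A) * wA := rfl
  have hsyval : s (y:A) * (y:A) = 1 := by
    rw [hyval, hmul, hsy₀]
    rw [mul_assoc, ← mul_assoc ((↑y₀⁻¹:A)), Units.inv_mul, one_mul, hswa]
  have hsy : s (y:A) = (↑y⁻¹:A) := eqinvl y _ hsyval
  have hsyinv : s ((↑y⁻¹:A)) = (y:A) := by rw [← hsy, hinv]
  have hszval : s (z:A) * (z:A) = 1 := by
    have hzval : (z:A) = (↑y⁻¹:A) * (x:A) := rfl
    rw [hzval, hmul, hsyinv]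
    calc (s (x:A) * (y:A)) * ((↑y⁻¹:A) * (x:A))
        = s (x:A) * (((y:A) * (↑y⁻¹:A)) * (x:A)) := by
          rw [mul_assoc, ← mul_assoc ((y:A))]
      _ = s (x:A) * (x:A) := by rw [Units.mul_inv, one_mul]
      _ = 1 := hx
  have hcomyw : Commute y₀ wU := hwy₀U.symm
  have h1pow : ((y₀:A))^4 = eA^2 := by
    rw [heAval]
    noncomm_ring
  have hy4 : y^4 = 1 := by
    apply Units.ext
    rw [hydef, hcomyw.mul_pow]
    simp only [Units.val_mul, Units.val_pow_eq_pow_val, Units.val_one, hwUval]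
    rw [h1pow, hS₂comm (eA^2) (wA^4) (pow_mem hemem 2) (pow_mem hwmem 4), hw4]
  have hyxU2 : y * x * y⁻¹ = x⁻¹ := by
    rw [hydef]
    have hwxw : wU * x * wU⁻¹ = x := by
      rw [hwxU]; group
    calc y₀ * wU * x * (y₀ * wU)⁻¹ = y₀ * (wU * x * wU⁻¹) * y₀⁻¹ := by group
      _ = y₀ * x * y₀⁻¹ := by rw [hwxw]
      _ = x⁻¹ := hy₀xU
  have hz2 : z^2 = y⁻¹ * y⁻¹ := by
    have hxy : x * y⁻¹ = y⁻¹ * x⁻¹ := by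
      calc x * y⁻¹ = y⁻¹ * (y * x * y⁻¹) := by group
        _ = y⁻¹ * x⁻¹ := by rw [hyxU2]
    rw [hzdef]
    calc (y⁻¹ * x)^2 = y⁻¹ * (x * y⁻¹) * x := by rw [sq]; group
      _ = y⁻¹ * (y⁻¹ * x⁻¹) * x := by rw [hxy]
      _ = y⁻¹ * y⁻¹ := by group
  have hz4 : z^4 = 1 := by
    have hzz : z^4 = (z^2)^2 := by norm_num [← pow_mul]
    rw [hzz, hz2]
    have h2' : (y⁻¹ * y⁻¹)^2 = (y^4)⁻¹ := by rw [sq]; group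
    rw [h2', hy4, inv_one]
  exact ⟨y, z, hsyval, hszval, hy4, hz4, (mul_inv_cancel_left y x).symm⟩
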